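/- Let d ∈ ℕ, 1 ≤ p < ∞, and let T ⊂ ℝ^d be a d-simplex with vertices v¹, …, v^{d+1}. Let L be the unique affine function on ℝ^d with L(vⁱ) = Q(vⁱ) for i = 1, …, d+1 (the linear interpolant of Q at the vertices). Then L(x) ≥ Q(x) for all x ∈ T, and (∫_T (L(x) − Q(x))^p dx)^{1/p} = inf{ (∫_T (u(x) − Q(x))^p dx)^{1/p} : u affine, u(x) ≥ Q(x) for all x ∈ T }; i.e., the best one-sided L_p-approximation of Q from above by affine functions on T coincides with the error of linear interpolation of Q at the vertices of T. -/

import Mathlib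

open MeasureTheory Metric Set

lemma convex_QsubL {d : ℕ} (a : EuclideanSpace ℝ (Fin d)) (c : ℝ) :
    ConvexOn ℝ (Set.univ : Set (EuclideanSpace ℝ (Fin d)))
      (fun x => (∑ j, x j ^ 2) - ((inner ℝ a x : ℝ) + c)) := by
  refine ⟨convex_univ, ?_⟩
  intro x _ y _ t s ht hs hts
  have hxy : ∀ j, (t • x + s • y) j = t * x j + s * y j := fun j => rfl
  have hinner : (inner ℝ a (t • x + s • y) : ℝ) = t * inner ℝ a x + s * inner ℝ a y := by
    rw [inner_add_right, real_inner_smul_right, real_inner_smul_right]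
  have hsum : ∑ j, (t • x + s • y) j ^ 2 ≤ t * ∑ j, x j ^ 2 + s * ∑ j, y j ^ 2 := by
    rw [Finset.mul_sum, Finset.mul_sum, ← Finset.sum_add_distrib]
    apply Finset.sum_le_sum
    intro j _
    rw [hxy]
    nlinarith [sq_nonneg (x j - y j), mul_nonneg ht hs]
  simp only [smul_eq_mul]
  rw [hinner]
  have hc : t * c + s * c = c := by rw [← add_mul, hts, one_mul]
  ring_nf
  ring_nf at hsum hc
  linarith

lemma convex_aff {d : ℕ} (a : EuclideanSpace ℝ (Fin d)) (c : ℝ)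
    (b : EuclideanSpace ℝ (Fin d)) (e : ℝ) :
    ConvexOn ℝ (Set.univ : Set (EuclideanSpace ℝ (Fin d)))
      (fun x => ((inner ℝ a x : ℝ) + c) - ((inner ℝ b x : ℝ) + e)) := by
  refine ⟨convex_univ, ?_⟩
  intro x _ y _ t s ht hs hts
  have h1 : (inner ℝ a (t • x + s • y) : ℝ) = t * inner ℝ a x + s * inner ℝ a y := by
    rw [inner_add_right, real_inner_smul_right, real_inner_smul_right]
  have h2 : (inner ℝ b (t • x + s • y) : ℝ) = t * inner ℝ b x + s * inner ℝ b y := by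
    rw [inner_add_right, real_inner_smul_right, real_inner_smul_right]
  simp only [smul_eq_mul]
  rw [h1, h2]
  have hc : t * c + s * c = c := by rw [← add_mul, hts, one_mul]
  have he : t * e + s * e = e := by rw [← add_mul, hts, one_mul]
  ring_nf
  ring_nf at hc he
  linarith

theorem linear_interpolation_is_best_onesided_above
    (d : ℕ) (hd : 0 < d) (p : ℝ) (hp : 1 ≤ p)
    (v : Fin (d + 1) → EuclideanSpace ℝ (Fin d))
    (hind : AffineIndependent ℝ v)
    (a : EuclideanSpace ℝ (Fin d)) (c : ℝ)
    (hinterp : ∀ i : Fin (d + 1), (inner ℝ a (v i) : ℝ) + c = ∑ j, v i j ^ 2) :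
    (∀ x ∈ convexHull ℝ (Set.range v), (∑ j, x j ^ 2) ≤ (inner ℝ a x : ℝ) + c) ∧
    (∫ x in convexHull ℝ (Set.range v),
        (((inner ℝ a x : ℝ) + c) - ∑ j, x j ^ 2) ^ p) ^ (1 / p) =
      sInf {r : ℝ | ∃ (b : EuclideanSpace ℝ (Fin d)) (e : ℝ),
        (∀ x ∈ convexHull ℝ (Set.range v), (∑ j, x j ^ 2) ≤ (inner ℝ b x : ℝ) + e) ∧
        r = (∫ x in convexHull ℝ (Set.range v),
          (((inner ℝ b x : ℝ) + e) - ∑ j, x j ^ 2) ^ p) ^ (1 / p)} := by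
  have hp0 : (0:ℝ) < p := lt_of_lt_of_le one_pos hp
  have hScvx : Convex ℝ (convexHull ℝ (Set.range v)) := convex_convexHull ℝ _
  have hScomp : IsCompact (convexHull ℝ (Set.range v)) :=
    (Set.finite_range v).isCompact_convexHull ℝ
  have hSmeas : MeasurableSet (convexHull ℝ (Set.range v)) :=
    hScomp.isClosed.measurableSet
  have hrpow_cont : Continuous fun t : ℝ => t ^ p := by
    rw [continuous_iff_continuousAt]
    intro t
    exact Real.continuousAt_rpow_const t p (Or.inr hp0.le)
  have hcont : ∀ (b : EuclideanSpace ℝ (Fin d)) (e : ℝ),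
      Continuous fun x : EuclideanSpace ℝ (Fin d) =>
        (((inner ℝ b x : ℝ) + e) - ∑ j, x j ^ 2) ^ p := by
    intro b e
    apply hrpow_cont.comp
    have hc1 : Continuous fun x : EuclideanSpace ℝ (Fin d) => (inner ℝ b x : ℝ) :=
      continuous_const.inner continuous_id
    have hc2 : Continuous fun x : EuclideanSpace ℝ (Fin d) => ∑ j, x j ^ 2 :=
      continuous_finset_sum _ fun j _ => ((continuous_apply j).comp (PiLp.continuous_ofLp 2 _)).pow 2
    exact (hc1.add continuous_const).sub hc2
  have hintg : ∀ (b : EuclideanSpace ℝ (Fin d)) (e : ℝ),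
      IntegrableOn (fun x : EuclideanSpace ℝ (Fin d) =>
        (((inner ℝ b x : ℝ) + e) - ∑ j, x j ^ 2) ^ p) (convexHull ℝ (Set.range v)) := by
    intro b e
    exact (hcont b e).continuousOn.integrableOn_compact hScomp
  -- Part 1
  have part1 : ∀ x ∈ convexHull ℝ (Set.range v),
      (∑ j, x j ^ 2) ≤ (inner ℝ a x : ℝ) + c := by
    intro x hx
    have hcv : ConvexOn ℝ (convexHull ℝ (Set.range v))
        (fun x : EuclideanSpace ℝ (Fin d) => (∑ j, x j ^ 2) - ((inner ℝ a x : ℝ) + c)) :=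
      (convex_QsubL a c).subset (Set.subset_univ _) hScvx
    obtain ⟨y, hy, hle⟩ := hcv.exists_ge_of_mem_convexHull (subset_convexHull ℝ _) hx
    obtain ⟨i, rfl⟩ := hy
    have := hinterp i
    simp only at hle
    linarith
  refine ⟨part1, ?_⟩
  have hmem : (∫ x in convexHull ℝ (Set.range v),
      (((inner ℝ a x : ℝ) + c) - ∑ j, x j ^ 2) ^ p) ^ (1 / p) ∈
      {r : ℝ | ∃ (b : EuclideanSpace ℝ (Fin d)) (e : ℝ),
        (∀ x ∈ convexHull ℝ (Set.range v), (∑ j, x j ^ 2) ≤ (inner ℝ b x : ℝ) + e) ∧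
        r = (∫ x in convexHull ℝ (Set.range v),
          (((inner ℝ b x : ℝ) + e) - ∑ j, x j ^ 2) ^ p) ^ (1 / p)} :=
    ⟨a, c, part1, rfl⟩
  have hlb : ∀ r ∈ {r : ℝ | ∃ (b : EuclideanSpace ℝ (Fin d)) (e : ℝ),
        (∀ x ∈ convexHull ℝ (Set.range v), (∑ j, x j ^ 2) ≤ (inner ℝ b x : ℝ) + e) ∧
        r = (∫ x in convexHull ℝ (Set.range v),
          (((inner ℝ b x : ℝ) + e) - ∑ j, x j ^ 2) ^ p) ^ (1 / p)},
      (∫ x in convexHull ℝ (Set.range v),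
        (((inner ℝ a x : ℝ) + c) - ∑ j, x j ^ 2) ^ p) ^ (1 / p) ≤ r := by
    rintro r ⟨b, e, hbe, rfl⟩
    have hLu : ∀ x ∈ convexHull ℝ (Set.range v),
        (inner ℝ a x : ℝ) + c ≤ (inner ℝ b x : ℝ) + e := by
      intro x hx
      have hcv : ConvexOn ℝ (convexHull ℝ (Set.range v))
          (fun x : EuclideanSpace ℝ (Fin d) =>
            ((inner ℝ a x : ℝ) + c) - ((inner ℝ b x : ℝ) + e)) :=
        (convex_aff a c b e).subset (Set.subset_univ _) hScvx
      obtain ⟨y, hy, hle⟩ := hcv.exists_ge_of_mem_convexHull (subset_convexHull ℝ _) hx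
      obtain ⟨i, rfl⟩ := hy
      have h1 := hinterp i
      have h2 := hbe (v i) (subset_convexHull ℝ _ (Set.mem_range_self i))
      linarith
    have hintle : (∫ x in convexHull ℝ (Set.range v),
        (((inner ℝ a x : ℝ) + c) - ∑ j, x j ^ 2) ^ p) ≤
        ∫ x in convexHull ℝ (Set.range v),
        (((inner ℝ b x : ℝ) + e) - ∑ j, x j ^ 2) ^ p := by
      apply setIntegral_mono_on (hintg a c) (hintg b e) hSmeas
      intro x hx
      exact Real.rpow_le_rpow (by linarith [part1 x hx]) (by linarith [hLu x hx]) hp0.le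
    exact Real.rpow_le_rpow
      (setIntegral_nonneg hSmeas fun x hx => Real.rpow_nonneg (by linarith [part1 x hx]) p)
      hintle (by positivity)
  exact le_antisymm
    (le_csInf ⟨_, hmem⟩ hlb)
    (csInf_le ⟨_, hlb⟩ hmem)
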